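/- Let 𝓤 = (G, [R], Π) be a unique games instance on a graph G = (V, E), and let 𝓤' be the unique games instance on the bipartite double cover G' = (V₁, V₂, E'), where V₁ and V₂ are two copies of V, each edge uv ∈ E gives rise to the two edges u₁v₂ and u₂v₁ of E', and both carry the same bijection π_{u,v} (with the corresponding inverses in the reverse direction). If there exists a labeling Λ' : V₁ ∪ V₂ → [R] satisfying at least a δ fraction of the edges of G', then there exists a labeling Λ : V → [R] satisfying at least a δ/4 fraction of the edges of G. -/

import Mathlib

open scoped BigOperators Classical

open Finset

lemma double_cover_keycount {V : Type} [Fintype V] {u v : V} (huv : u ≠ v) :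
    4 * (Finset.univ.filter fun f : V → Bool => f u = true ∧ f v = false).card =
      (Finset.univ : Finset (V → Bool)).card := by
  classical
  have hfil : (Finset.univ.filter fun f : V → Bool => f u = true ∧ f v = false) =
      Fintype.piFinset (fun w => if w = u then {true} else if w = v then ({false} : Finset Bool)
        else Finset.univ) := by
    ext f
    simp only [mem_filter, mem_univ, true_and, Fintype.mem_piFinset]
    constructor
    · rintro ⟨h1, h2⟩ w
      by_cases hw : w = u
      · subst hw; simp [h1]
      · by_cases hw2 : w = v
        · subst hw2; simp [hw, h2]
        · simp [hw, hw2]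
    · intro h
      refine ⟨?_, ?_⟩
      · have := h u; simpa using this
      · have := h v; simpa [Ne.symm huv] using this
  rw [hfil, Fintype.card_piFinset]
  have hcard : (Finset.univ : Finset (V → Bool)).card = ∏ w : V, (2 : ℕ) := by
    simp [Finset.prod_const, Finset.card_univ]
  rw [hcard]
  have hsplit : ∀ w : V, (2 : ℕ) =
      ((if w = u then ({true} : Finset Bool) else if w = v then {false} else Finset.univ).card) *
        ((if w = u then 2 else 1) * (if w = v then 2 else 1)) := by
    intro w
    by_cases hw : w = u
    · subst hw
      have : ¬ (w = v) := huv
      simp_all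
    · by_cases hw2 : w = v
      · subst hw2; simp [Ne.symm huv]
      · simp [hw, hw2]
  calc 4 * ∏ w : V, (if w = u then ({true} : Finset Bool) else if w = v then {false}
          else Finset.univ).card
      = (∏ w : V, (if w = u then ({true} : Finset Bool) else if w = v then {false}
          else Finset.univ).card) *
        ((∏ w : V, (if w = u then (2:ℕ) else 1)) * (∏ w : V, (if w = v then (2:ℕ) else 1))) := by
        rw [Finset.prod_ite_eq' Finset.univ u (fun _ => (2:ℕ)),
          Finset.prod_ite_eq' Finset.univ v (fun _ => (2:ℕ))]
        simp [mul_comm]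
    _ = ∏ w : V, ((if w = u then ({true} : Finset Bool) else if w = v then {false}
          else Finset.univ).card * ((if w = u then (2:ℕ) else 1) * (if w = v then (2:ℕ) else 1))) := by
        rw [Finset.prod_mul_distrib, Finset.prod_mul_distrib]
    _ = ∏ w : V, (2 : ℕ) := by
        exact Finset.prod_congr rfl (fun w _ => (hsplit w).symm)

/-- Unique games on a bipartite double cover: let `𝓤` be a unique games instance on a
graph `G = (V,E)` with bijections `π_{u,v}` (satisfying `π_{v,u} = π_{u,v}⁻¹`), and let
`𝓤'` be the instance on the bipartite double cover `G' = (V₁, V₂, E')`, where each edge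
`uv ∈ E` gives rise to the edges `u₁v₂` and `u₂v₁`, both carrying `π_{u,v}`. Here edges
are counted by ordered adjacent pairs `(u,v)` of `G`, the pair `(u,v)` corresponding to
the edge `u₁v₂` of `G'`. If some labeling `Λ'` of `V₁ ∪ V₂` satisfies at least a `δ`
fraction of the edges of `G'`, then some labeling `Λ` of `V` satisfies at least a `δ/4`
fraction of the edges of `G`. -/
theorem double_cover_labeling {V : Type} [Fintype V] (R : ℕ) (G : SimpleGraph V)
    (π : V → V → Equiv.Perm (Fin R))
    (hπ : ∀ u v : V, π v u = (π u v).symm)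
    (δ : ℝ) (Λ' : V ⊕ V → Fin R)
    (hΛ' : δ * ((Finset.univ.filter fun p : V × V => G.Adj p.1 p.2).card : ℝ) ≤
      ((Finset.univ.filter fun p : V × V =>
          G.Adj p.1 p.2 ∧ π p.1 p.2 (Λ' (Sum.inl p.1)) = Λ' (Sum.inr p.2)).card : ℝ)) :
    ∃ Λ : V → Fin R,
      δ / 4 * ((Finset.univ.filter fun p : V × V => G.Adj p.1 p.2).card : ℝ) ≤
        ((Finset.univ.filter fun p : V × V =>
            G.Adj p.1 p.2 ∧ π p.1 p.2 (Λ p.1) = Λ p.2).card : ℝ) := by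
  classical
  set S : Finset (V × V) := Finset.univ.filter (fun p : V × V =>
      G.Adj p.1 p.2 ∧ π p.1 p.2 (Λ' (Sum.inl p.1)) = Λ' (Sum.inr p.2)) with hS
  set E : Finset (V × V) := Finset.univ.filter (fun p : V × V => G.Adj p.1 p.2) with hE
  set L : (V → Bool) → V → Fin R :=
    fun f w => if f w then Λ' (Sum.inl w) else Λ' (Sum.inr w) with hL
  set N : (V → Bool) → ℕ := fun f => (Finset.univ.filter fun p : V × V =>
      G.Adj p.1 p.2 ∧ π p.1 p.2 (L f p.1) = L f p.2).card with hN
  set T : (V → Bool) → Finset (V × V) :=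
    fun f => S.filter (fun p => f p.1 = true ∧ f p.2 = false) with hT
  have hTN : ∀ f, (T f).card ≤ N f := by
    intro f
    apply Finset.card_le_card
    intro p hp
    simp only [hT, hS, mem_filter, mem_univ, true_and] at hp ⊢
    obtain ⟨⟨hadj, hsat⟩, h1, h2⟩ := hp
    refine ⟨hadj, ?_⟩
    simp [hL, h1, h2, hsat]
  have hne : ∀ p : V × V, p ∈ S → p.1 ≠ p.2 := by
    intro p hp
    simp only [hS, mem_filter] at hp
    exact G.ne_of_adj hp.2.1
  have hsum : (∑ f : V → Bool, (T f).card) * 4 =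
      S.card * (Finset.univ : Finset (V → Bool)).card := by
    have h1 : ∀ f : V → Bool, (T f).card =
        ∑ p ∈ S, if f p.1 = true ∧ f p.2 = false then 1 else 0 := by
      intro f; exact Finset.card_filter _ _
    calc (∑ f : V → Bool, (T f).card) * 4
        = (∑ f : V → Bool, ∑ p ∈ S, if f p.1 = true ∧ f p.2 = false then 1 else 0) * 4 := by
          rw [Finset.sum_congr rfl (fun f _ => h1 f)]
      _ = (∑ p ∈ S, ∑ f : V → Bool, if f p.1 = true ∧ f p.2 = false then 1 else 0) * 4 := by
          rw [Finset.sum_comm]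
      _ = ∑ p ∈ S, 4 * (Finset.univ.filter fun f : V → Bool =>
            f p.1 = true ∧ f p.2 = false).card := by
          rw [Finset.sum_mul]
          refine Finset.sum_congr rfl (fun p _ => ?_)
          rw [← Finset.card_filter]
          ring
      _ = ∑ p ∈ S, (Finset.univ : Finset (V → Bool)).card := by
          refine Finset.sum_congr rfl (fun p hp => ?_)
          exact double_cover_keycount (hne p hp)
      _ = S.card * (Finset.univ : Finset (V → Bool)).card := by
          rw [Finset.sum_const, smul_eq_mul]
  have hn2 : (0 : ℝ) ≤ ((Finset.univ : Finset (V → Bool)).card : ℝ) := by exact Nat.cast_nonneg _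
  have key : ∑ f : V → Bool, (δ / 4 * (E.card : ℝ)) ≤ ∑ f : V → Bool, (N f : ℝ) := by
    have hsumR : (∑ f : V → Bool, ((T f).card : ℝ)) * 4 =
        (S.card : ℝ) * ((Finset.univ : Finset (V → Bool)).card : ℝ) := by
      exact_mod_cast congrArg (Nat.cast : ℕ → ℝ) hsum
    have h2 : ∑ f : V → Bool, ((T f).card : ℝ) ≤ ∑ f : V → Bool, (N f : ℝ) := by
      refine Finset.sum_le_sum (fun f _ => ?_)
      exact_mod_cast hTN f
    calc ∑ f : V → Bool, (δ / 4 * (E.card : ℝ))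
        = ((Finset.univ : Finset (V → Bool)).card : ℝ) * (δ / 4 * (E.card : ℝ)) := by
          rw [Finset.sum_const, nsmul_eq_mul]
      _ = (δ * (E.card : ℝ)) * ((Finset.univ : Finset (V → Bool)).card : ℝ) / 4 := by ring
      _ ≤ (S.card : ℝ) * ((Finset.univ : Finset (V → Bool)).card : ℝ) / 4 := by
          have := mul_le_mul_of_nonneg_right hΛ' hn2
          linarith
      _ = ∑ f : V → Bool, ((T f).card : ℝ) := by rw [← hsumR]; ring
      _ ≤ ∑ f : V → Bool, (N f : ℝ) := h2
  obtain ⟨f, _, hf⟩ := Finset.exists_le_of_sum_le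
    (Finset.univ_nonempty : (Finset.univ : Finset (V → Bool)).Nonempty) key
  exact ⟨L f, hf⟩
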